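/- Let φ : ℕ → ℝ with φ(0) = 0 and φ(x) > 0 for x ≥ 1, let μ be a probability measure on (0,∞) with finite second moment such that Z_s < ∞ for μ-almost every s, set λ = ∫ s dμ(s) and assume Z_λ < ∞, and define the mixture m(x) = ∫ I_φ(s)(x) dμ(s). Let u : ℕ → (0,∞). Let f : ℕ → ℝ be integrable with respect to I_φ(λ) and with respect to m, and let g be a solution of the Stein equation for f with respect to I_φ(λ) with M := sup_{x ∈ ℕ} |g(x+1) − g(x)|/u(x) < ∞ and Σ_x |g(x+1)| I_φ(s)(x) < ∞ for μ-almost every s. Let K ≥ 0 be such that, for every h : ℕ → ℝ satisfying |h(x+1) − h(x)| ≤ u(x+1) for all x ∈ ℕ and integrable with respect to I_φ(λ) and with respect to I_φ(s) for μ-almost every s, every solution g_h of the Stein equation for h with respect to I_φ(λ) with g_h(0) = 0 satisfies sup_x |g_h(x)| ≤ K. Then |Σ_x f(x) m(x) − Σ_x f(x) I_φ(λ)(x)| ≤ M · K · ∫ (s − λ)² dμ(s). -/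

import Mathlib

open MeasureTheory
open scoped BigOperators

/-- The product `φ(1)⋯φ(x)` (empty product equal to `1`). -/
noncomputable def phiProd (φ : ℕ → ℝ) (x : ℕ) : ℝ := ∏ i ∈ Finset.range x, φ (i + 1)

/-- Normalizing constant `Z_λ = Σ_{x≥0} λ^x / (φ(1)⋯φ(x))`. -/
noncomputable def Zphi (φ : ℕ → ℝ) (lam : ℝ) : ℝ := ∑' x : ℕ, lam ^ x / phiProd φ x

/-- The probability measure `I_φ(λ)(x) = Z_λ⁻¹ λ^x / (φ(1)⋯φ(x))`. -/
noncomputable def Iphi (φ : ℕ → ℝ) (lam : ℝ) (x : ℕ) : ℝ :=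
  (lam ^ x / phiProd φ x) / Zphi φ lam

namespace SteinAux

variable {φ : ℕ → ℝ}

lemma phiProd_pos (hφ : ∀ x : ℕ, 1 ≤ x → 0 < φ x) (x : ℕ) : 0 < phiProd φ x :=
  Finset.prod_pos fun i _ => hφ (i + 1) (Nat.le_add_left 1 i)

lemma Zphi_nonneg (hφ : ∀ x : ℕ, 1 ≤ x → 0 < φ x) {s : ℝ} (hs : 0 ≤ s) :
    0 ≤ Zphi φ s :=
  tsum_nonneg fun x => div_nonneg (pow_nonneg hs x) (phiProd_pos hφ x).le

lemma one_le_Zphi (hφ : ∀ x : ℕ, 1 ≤ x → 0 < φ x) {s : ℝ} (hs : 0 ≤ s)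
    (hsum : Summable fun x : ℕ => s ^ x / phiProd φ x) : 1 ≤ Zphi φ s := by
  have h0 : s ^ 0 / phiProd φ 0 = 1 := by simp [phiProd]
  have := Summable.le_tsum hsum 0 (fun i _ => div_nonneg (pow_nonneg hs i) (phiProd_pos hφ i).le)
  rw [h0] at this
  exact this

lemma Iphi_nonneg (hφ : ∀ x : ℕ, 1 ≤ x → 0 < φ x) {s : ℝ} (hs : 0 ≤ s) (x : ℕ) :
    0 ≤ Iphi φ s x :=
  div_nonneg (div_nonneg (pow_nonneg hs x) (phiProd_pos hφ x).le) (Zphi_nonneg hφ hs)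

lemma summable_Iphi {s : ℝ} (hsum : Summable fun x : ℕ => s ^ x / phiProd φ x) :
    Summable (Iphi φ s) := hsum.div_const _

lemma tsum_Iphi (hφ : ∀ x : ℕ, 1 ≤ x → 0 < φ x) {s : ℝ} (hs : 0 ≤ s)
    (hsum : Summable fun x : ℕ => s ^ x / phiProd φ x) :
    ∑' x : ℕ, Iphi φ s x = 1 := by
  have hZ : Zphi φ s ≠ 0 := by
    have := one_le_Zphi hφ hs hsum; linarith
  unfold Iphi
  rw [tsum_div_const]
  exact div_self hZ

lemma Iphi_le_one (hφ : ∀ x : ℕ, 1 ≤ x → 0 < φ x) {s : ℝ} (hs : 0 ≤ s)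
    (hsum : Summable fun x : ℕ => s ^ x / phiProd φ x) (x : ℕ) : Iphi φ s x ≤ 1 := by
  have hZ1 : 1 ≤ Zphi φ s := one_le_Zphi hφ hs hsum
  have hle : s ^ x / phiProd φ x ≤ Zphi φ s :=
    Summable.le_tsum hsum x (fun i _ => div_nonneg (pow_nonneg hs i) (phiProd_pos hφ i).le)
  rw [Iphi, div_le_one (by linarith)]
  exact hle.trans (by linarith)

lemma Iphi_succ_mul (hφ : ∀ x : ℕ, 1 ≤ x → 0 < φ x) (s : ℝ) (x : ℕ) :
    φ (x + 1) * Iphi φ s (x + 1) = s * Iphi φ s x := by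
  have hc : φ (x + 1) ≠ 0 := (hφ (x + 1) (Nat.le_add_left 1 x)).ne'
  have hP : phiProd φ x ≠ 0 := (phiProd_pos hφ x).ne'
  have hPS : phiProd φ (x + 1) = phiProd φ x * φ (x + 1) := Finset.prod_range_succ _ _
  unfold Iphi
  rw [hPS]
  rcases eq_or_ne (Zphi φ s) 0 with h | h
  · simp [h]
  · field_simp
    ring

lemma abs_summable_iff (hφ : ∀ x : ℕ, 1 ≤ x → 0 < φ x) {s : ℝ} (hs : 0 ≤ s)
    {w : ℕ → ℝ} (hw : Summable fun x => |w x| * Iphi φ s x) :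
    Summable fun x => w x * Iphi φ s x := by
  refine Summable.of_abs ?_
  refine hw.congr fun x => ?_
  rw [abs_mul, abs_of_nonneg (Iphi_nonneg hφ hs x)]

lemma stationarity (hφ0 : φ 0 = 0) (hφ : ∀ x : ℕ, 1 ≤ x → 0 < φ x) {s : ℝ} (hs : 0 ≤ s)
    {w : ℕ → ℝ} (hw : Summable fun x => |w (x + 1)| * Iphi φ s x) :
    Summable (fun x => φ x * w x * Iphi φ s x) ∧
      ∑' x : ℕ, φ x * w x * Iphi φ s x = s * ∑' x : ℕ, w (x + 1) * Iphi φ s x := by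
  have hw' : Summable fun x => w (x + 1) * Iphi φ s x := abs_summable_iff hφ hs hw
  have key : ∀ x : ℕ, φ (x + 1) * w (x + 1) * Iphi φ s (x + 1)
      = s * (w (x + 1) * Iphi φ s x) := by
    intro x
    rw [mul_comm (φ (x + 1)) (w (x + 1)), mul_assoc, Iphi_succ_mul hφ]
    ring
  have hsh : Summable (fun x : ℕ => φ (x + 1) * w (x + 1) * Iphi φ s (x + 1)) :=
    (hw'.mul_left s).congr fun x => (key x).symm
  have hsum : Summable (fun x => φ x * w x * Iphi φ s x) := by
    exact (summable_nat_add_iff 1).mp hsh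
  refine ⟨hsum, ?_⟩
  rw [Summable.tsum_eq_zero_add hsum]
  simp only [hφ0, zero_mul]
  rw [zero_add, tsum_congr key, tsum_mul_left]

lemma stein_transfer (hφ0 : φ 0 = 0) (hφ : ∀ x : ℕ, 1 ≤ x → 0 < φ x)
    {s lam E : ℝ} (hs : 0 ≤ s)
    (hsum : Summable fun x : ℕ => s ^ x / phiProd φ x)
    {w h : ℕ → ℝ}
    (heq : ∀ x : ℕ, lam * w (x + 1) - φ x * w x = h x - E)
    (hw : Summable fun x => |w (x + 1)| * Iphi φ s x) :
    (Summable fun x => |h x| * Iphi φ s x) ∧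
      (∑' x : ℕ, h x * Iphi φ s x) - E = (lam - s) * ∑' x : ℕ, w (x + 1) * Iphi φ s x := by
  have hIn : ∀ x, 0 ≤ Iphi φ s x := Iphi_nonneg hφ hs
  have hφn : ∀ x, 0 ≤ φ x := by
    intro x
    cases x with
    | zero => simp [hφ0]
    | succ n => exact (hφ (n + 1) (Nat.le_add_left 1 n)).le
  have hw' : Summable fun x => w (x + 1) * Iphi φ s x := abs_summable_iff hφ hs hw
  have hst := stationarity hφ0 hφ hs hw
  have hstabs := stationarity hφ0 hφ hs (w := fun x => |w x|)
    (hw.congr fun x => by rw [abs_abs])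
  have hI : Summable (Iphi φ s) := summable_Iphi hsum
  have hpt : ∀ x : ℕ, h x * Iphi φ s x
      = lam * (w (x + 1) * Iphi φ s x) - φ x * w x * Iphi φ s x + E * Iphi φ s x := by
    intro x
    have := heq x
    have hh : h x = lam * w (x + 1) - φ x * w x + E := by linarith
    rw [hh]; ring
  have hsumh : Summable fun x => h x * Iphi φ s x := by
    refine Summable.congr ?_ fun x => (hpt x).symm
    exact ((hw'.mul_left lam).sub hst.1).add (hI.mul_left E)
  have habs : Summable fun x => |h x| * Iphi φ s x := by
    have hb : Summable fun x =>
        |lam| * (|w (x + 1)| * Iphi φ s x) + φ x * |w x| * Iphi φ s x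
          + |E| * Iphi φ s x :=
      ((hw.mul_left |lam|).add hstabs.1).add (hI.mul_left |E|)
    refine Summable.of_nonneg_of_le (fun x => mul_nonneg (abs_nonneg _) (hIn x)) ?_ hb
    intro x
    have h1 : |h x| * Iphi φ s x = |h x * Iphi φ s x| := by
      rw [abs_mul, abs_of_nonneg (hIn x)]
    rw [h1, hpt x]
    refine (abs_add_le _ _).trans ?_
    gcongr
    refine (abs_sub _ _).trans ?_
    gcongr
    · rw [abs_mul, abs_mul, abs_of_nonneg (hIn x)]
    · rw [abs_mul, abs_mul, abs_of_nonneg (hIn x), abs_of_nonneg (hφn x)]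
    · rw [abs_mul, abs_of_nonneg (hIn x)]
  refine ⟨habs, ?_⟩
  have ht : ∑' x, h x * Iphi φ s x
      = lam * (∑' x, w (x + 1) * Iphi φ s x) - s * (∑' x, w (x + 1) * Iphi φ s x)
        + E * 1 := by
    rw [tsum_congr hpt,
      Summable.tsum_add ((hw'.mul_left lam).sub hst.1) (hI.mul_left E),
      Summable.tsum_sub (hw'.mul_left lam) hst.1, tsum_mul_left, hst.2, tsum_mul_left,
      tsum_Iphi hφ hs hsum]
  rw [ht]; ring

noncomputable def mkSol (φ : ℕ → ℝ) (lam : ℝ) (h : ℕ → ℝ) (E : ℝ) : ℕ → ℝ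
  | 0 => 0
  | x + 1 => (φ x * mkSol φ lam h E x + h x - E) / lam

lemma mkSol_eq {lam : ℝ} (hlam : lam ≠ 0) (h : ℕ → ℝ) (E : ℝ) (x : ℕ) :
    lam * mkSol φ lam h E (x + 1) - φ x * mkSol φ lam h E x = h x - E := by
  rw [mkSol, mul_div_cancel₀ _ hlam]; ring

noncomputable def clamp (n : ℕ) (a : ℝ) : ℝ := max (-(n : ℝ)) (min (n : ℝ) a)

lemma abs_clamp_le_abs (n : ℕ) (a : ℝ) : |clamp n a| ≤ |a| := by
  rw [abs_le, clamp]
  constructor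
  · refine le_max_of_le_right ?_
    exact le_min (le_trans (neg_nonpos_of_nonneg (abs_nonneg a)) (Nat.cast_nonneg n))
      (neg_abs_le a)
  · exact max_le (le_trans (neg_nonpos_of_nonneg (Nat.cast_nonneg n)) (abs_nonneg a))
      (le_trans (min_le_right _ _) (le_abs_self a))

lemma abs_clamp_le_nat (n : ℕ) (a : ℝ) : |clamp n a| ≤ n := by
  rw [abs_le, clamp]
  constructor
  · exact le_max_left _ _
  · exact max_le (by simpa using Nat.cast_nonneg (α := ℝ) n) (min_le_left _ _)

lemma abs_clamp_sub_clamp (n : ℕ) (a b : ℝ) : |clamp n a - clamp n b| ≤ |a - b| := by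
  rw [clamp, clamp, max_comm (-(n:ℝ)) _, max_comm (-(n:ℝ)) _]
  refine (abs_max_sub_max_le_abs _ _ _).trans ?_
  have := abs_min_sub_min_le_max (n : ℝ) a (n : ℝ) b
  simpa using this

lemma tendsto_clamp (a : ℝ) :
    Filter.Tendsto (fun n : ℕ => clamp n a) Filter.atTop (nhds a) := by
  have : ∀ n : ℕ, |a| ≤ n → clamp n a = a := by
    intro n hn
    rw [clamp, min_eq_right ((le_abs_self a).trans hn),
      max_eq_right (by nlinarith [neg_abs_le a])]
  refine Filter.Tendsto.congr' ?_ tendsto_const_nhds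
  filter_upwards [Filter.eventually_atTop.2 ⟨⌈|a|⌉₊, fun n hn => this n
    ((Nat.le_ceil _).trans (by exact_mod_cast hn))⟩] with n hn
  exact hn.symm

lemma tsum_eq_toReal_sub {b : ℕ → ℝ} (hb : Summable fun x => |b x|) :
    ∑' x, b x = (∑' x, ENNReal.ofReal (b x)).toReal
      - (∑' x, ENNReal.ofReal (-(b x))).toReal := by
  have hp : Summable fun x => max (b x) 0 := by
    refine Summable.of_nonneg_of_le (fun x => le_max_right _ _) (fun x => ?_) hb
    exact max_le (le_abs_self _) (abs_nonneg _)
  have hm : Summable fun x => max (-(b x)) 0 := by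
    refine Summable.of_nonneg_of_le (fun x => le_max_right _ _) (fun x => ?_) hb
    exact max_le (by simpa using neg_le_abs (b x)) (abs_nonneg _)
  have hbb : ∀ x, b x = max (b x) 0 - max (-(b x)) 0 := by
    intro x; rcases le_total (b x) 0 with h | h
    · rw [max_eq_right h, max_eq_left (by linarith)]; ring
    · rw [max_eq_left h, max_eq_right (by linarith)]; ring
  rw [tsum_congr hbb, Summable.tsum_sub hp hm]
  have e1 : ENNReal.ofReal (∑' x, max (b x) 0) = ∑' x, ENNReal.ofReal (b x) := by
    rw [ENNReal.ofReal_tsum_of_nonneg (fun x => le_max_right _ _) hp]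
    refine tsum_congr fun x => ?_
    rcases le_total (b x) 0 with h | h
    · rw [max_eq_right h, ENNReal.ofReal_zero, ENNReal.ofReal_of_nonpos h]
    · rw [max_eq_left h]
  have e2 : ENNReal.ofReal (∑' x, max (-(b x)) 0) = ∑' x, ENNReal.ofReal (-(b x)) := by
    rw [ENNReal.ofReal_tsum_of_nonneg (fun x => le_max_right _ _) hm]
    refine tsum_congr fun x => ?_
    rcases le_total (-(b x)) 0 with h | h
    · rw [max_eq_right h, ENNReal.ofReal_zero, ENNReal.ofReal_of_nonpos h]
    · rw [max_eq_left h]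
  rw [← e1, ← e2, ENNReal.toReal_ofReal (tsum_nonneg fun x => le_max_right _ _),
    ENNReal.toReal_ofReal (tsum_nonneg fun x => le_max_right _ _)]

noncomputable def ZE (φ : ℕ → ℝ) (s : ℝ) : ENNReal :=
  ∑' x : ℕ, ENNReal.ofReal (s ^ x / phiProd φ x)

lemma measurable_ZE : Measurable (ZE φ) :=
  Measurable.ennreal_tsum fun x =>
    ENNReal.measurable_ofReal.comp ((measurable_id.pow_const x).div_const _)

noncomputable def IE (φ : ℕ → ℝ) (x : ℕ) (s : ℝ) : ℝ :=
  (s ^ x / phiProd φ x) / (ZE φ s).toReal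

lemma measurable_IE (x : ℕ) : Measurable (IE φ x) :=
  ((measurable_id.pow_const x).div_const _).div
    (measurable_ZE.ennreal_toReal)

lemma IE_eq (hφ : ∀ x : ℕ, 1 ≤ x → 0 < φ x) {s : ℝ} (hs : 0 ≤ s)
    (hsum : Summable fun x : ℕ => s ^ x / phiProd φ x) (x : ℕ) :
    IE φ x s = Iphi φ s x := by
  have : ZE φ s = ENNReal.ofReal (Zphi φ s) := by
    rw [Zphi, ENNReal.ofReal_tsum_of_nonneg
      (fun i => div_nonneg (pow_nonneg hs i) (phiProd_pos hφ i).le) hsum, ZE]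
  rw [IE, this, ENNReal.toReal_ofReal (Zphi_nonneg hφ hs), Iphi]

/-- measurable a.e.-version of `s ↦ ∑' x, h x * Iphi φ s x`. -/
noncomputable def HE (φ : ℕ → ℝ) (h : ℕ → ℝ) (s : ℝ) : ℝ :=
  (∑' x : ℕ, ENNReal.ofReal (h x * IE φ x s)).toReal
    - (∑' x : ℕ, ENNReal.ofReal (-(h x * IE φ x s))).toReal

lemma measurable_HE (h : ℕ → ℝ) : Measurable (HE φ h) := by
  refine Measurable.sub ?_ ?_
  · exact (Measurable.ennreal_tsum fun x =>
      ENNReal.measurable_ofReal.comp ((measurable_IE x).const_mul (h x))).ennreal_toReal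
  · exact (Measurable.ennreal_tsum fun x =>
      ENNReal.measurable_ofReal.comp (((measurable_IE x).const_mul (h x)).neg)).ennreal_toReal

lemma HE_eq (hφ : ∀ x : ℕ, 1 ≤ x → 0 < φ x) {s : ℝ} (hs : 0 ≤ s)
    (hsum : Summable fun x : ℕ => s ^ x / phiProd φ x) {h : ℕ → ℝ}
    (hh : Summable fun x => |h x| * Iphi φ s x) :
    HE φ h s = ∑' x : ℕ, h x * Iphi φ s x := by
  have habs : Summable fun x => |h x * Iphi φ s x| :=
    hh.congr fun x => by rw [abs_mul, abs_of_nonneg (Iphi_nonneg hφ hs x)]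
  rw [tsum_eq_toReal_sub habs, HE]
  congr 2 <;> exact tsum_congr fun x => by rw [IE_eq hφ hs hsum]

end SteinAux

open SteinAux Filter

/-- Unbiased approximation of mixed `I_φ(λ)` distributions:
`|Σ f dm − Σ f dI_φ(λ)| ≤ M · K · ∫ (s − λ)² dμ` where `λ = ∫ s dμ`,
`M = sup_x |g(x+1) − g(x)|/u(x)` and `K` is a uniform bound on the Stein solutions
(vanishing at `0`) for `d_{u→}`-Lipschitz test functions. -/
theorem Iphi_mixture_unbiased (φ : ℕ → ℝ) (hφ0 : φ 0 = 0)
    (hφ : ∀ x : ℕ, 1 ≤ x → 0 < φ x)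
    (μ : Measure ℝ) [IsProbabilityMeasure μ]
    (hμpos : ∀ᵐ s ∂μ, 0 < s)
    (hμ2 : Integrable (fun s : ℝ => s ^ 2) μ)
    (hZae : ∀ᵐ s ∂μ, Summable fun x : ℕ => s ^ x / phiProd φ x)
    (lam : ℝ) (hlamdef : lam = ∫ s, s ∂μ)
    (hZ : Summable fun x : ℕ => lam ^ x / phiProd φ x)
    (m : ℕ → ℝ) (hm : ∀ x : ℕ, m x = ∫ s, Iphi φ s x ∂μ)
    (u : ℕ → ℝ) (hu : ∀ x : ℕ, 0 < u x)
    (f : ℕ → ℝ)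
    (hf : Summable fun x : ℕ => |f x| * Iphi φ lam x)
    (hfm : Summable fun x : ℕ => |f x| * m x)
    (g : ℕ → ℝ)
    (hg : ∀ x : ℕ, lam * g (x + 1) - φ x * g x = f x - ∑' y : ℕ, f y * Iphi φ lam y)
    (hM : BddAbove (Set.range fun x : ℕ => |g (x + 1) - g x| / u x))
    (hgs : ∀ᵐ s ∂μ, Summable fun x : ℕ => |g (x + 1)| * Iphi φ s x)
    (K : ℝ) (hK0 : 0 ≤ K)
    (hK : ∀ h : ℕ → ℝ, (∀ x : ℕ, |h (x + 1) - h x| ≤ u (x + 1)) →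
      (Summable fun x : ℕ => |h x| * Iphi φ lam x) →
      (∀ᵐ s ∂μ, Summable fun x : ℕ => |h x| * Iphi φ s x) →
      ∀ gh : ℕ → ℝ,
        (∀ x : ℕ, lam * gh (x + 1) - φ x * gh x = h x - ∑' y : ℕ, h y * Iphi φ lam y) →
        gh 0 = 0 → ∀ x : ℕ, |gh x| ≤ K) :
    |(∑' x : ℕ, f x * m x) - ∑' x : ℕ, f x * Iphi φ lam x| ≤
      (⨆ x : ℕ, |g (x + 1) - g x| / u x) * K * ∫ s, (s - lam) ^ 2 ∂μ := by
  classical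
  haveI : (ae μ).NeBot := ae_neBot.mpr (IsProbabilityMeasure.ne_zero μ)
  set M := ⨆ x : ℕ, |g (x + 1) - g x| / u x with hMdef
  set Ef := ∑' y : ℕ, f y * Iphi φ lam y with hEfdef
  -- integrability of the identity
  have hId : Integrable (fun s : ℝ => s) μ := by
    refine ((integrable_const (1 : ℝ)).add hμ2).mono'
      measurable_id.aestronglyMeasurable ?_
    filter_upwards with s
    simp only [Real.norm_eq_abs, Pi.add_apply, id_eq]
    nlinarith [sq_nonneg (|s| - 1), sq_abs s, abs_nonneg s]
  -- positivity of lam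
  have hs_nn : 0 ≤ᵐ[μ] fun s : ℝ => s := hμpos.mono fun s hs => hs.le
  have hlam_nonneg : 0 ≤ lam := hlamdef ▸ integral_nonneg_of_ae hs_nn
  have hlam_pos : 0 < lam := by
    rcases hlam_nonneg.lt_or_eq with h | h
    · exact h
    · exfalso
      have h0 : ∫ s, s ∂μ = 0 := by rw [← hlamdef, ← h]
      have := (integral_eq_zero_iff_of_nonneg_ae hs_nn hId).mp h0
      obtain ⟨s, hs1, hs2⟩ := (hμpos.and this).exists
      simp only [Pi.zero_apply] at hs2
      exact absurd hs2 hs1.ne'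
  have hintlam : ∫ s, (lam - s) ∂μ = 0 := by
    rw [integral_sub (integrable_const lam) hId, integral_const]
    simp [hlamdef]
  have hIls : Integrable (fun s : ℝ => lam - s) μ := by
    have h1 := (integrable_const lam).sub hId
    exact h1.congr (by filter_upwards with s; simp)
  have hsq : Integrable (fun s : ℝ => (s - lam) ^ 2) μ := by
    have : (fun s : ℝ => (s - lam) ^ 2)
        = fun s : ℝ => s ^ 2 - (2 * lam) * s + lam ^ 2 := by
      funext s; ring
    rw [this]
    exact (hμ2.sub (hId.const_mul (2 * lam))).add (integrable_const _)
  -- measurability and integrability of s ↦ Iphi φ s x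
  have hImeas : ∀ x : ℕ, AEStronglyMeasurable (fun s => Iphi φ s x) μ := by
    intro x
    refine (measurable_IE (φ := φ) x).aestronglyMeasurable.congr ?_
    filter_upwards [hμpos, hZae] with s h1 h2
    exact IE_eq hφ h1.le h2 x
  have hmx_int : ∀ x : ℕ, Integrable (fun s => Iphi φ s x) μ := by
    intro x
    refine Integrable.mono' (integrable_const 1) (hImeas x) ?_
    filter_upwards [hμpos, hZae] with s h1 h2
    rw [Real.norm_eq_abs, abs_of_nonneg (Iphi_nonneg hφ h1.le x)]
    exact Iphi_le_one hφ h1.le h2 x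
  have hm_nonneg : ∀ x : ℕ, 0 ≤ m x := by
    intro x
    rw [hm x]
    refine integral_nonneg_of_ae ?_
    filter_upwards [hμpos] with s h1
    exact Iphi_nonneg hφ h1.le x
  -- interchange of sum and integral
  have hTS : ∑' x : ℕ, f x * m x = ∫ s, (∑' x : ℕ, f x * Iphi φ s x) ∂μ := by
    rw [integral_tsum (fun x => (hImeas x).const_mul (f x)) ?_]
    · exact tsum_congr fun x => by rw [hm x, integral_const_mul]
    · have hle : ∀ x : ℕ, ∫⁻ s, ‖f x * Iphi φ s x‖ₑ ∂μ = ENNReal.ofReal (|f x| * m x) := by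
        intro x
        have hint : Integrable (fun s => |f x| * Iphi φ s x) μ := (hmx_int x).const_mul _
        rw [hm x, ← integral_const_mul,
          ofReal_integral_eq_lintegral_ofReal hint
            (by filter_upwards [hμpos] with s h1
                exact mul_nonneg (abs_nonneg _) (Iphi_nonneg hφ h1.le x))]
        refine lintegral_congr_ae ?_
        filter_upwards [hμpos] with s h1
        rw [Real.enorm_eq_ofReal_abs, abs_mul, abs_of_nonneg (Iphi_nonneg hφ h1.le x)]
      rw [funext hle] at *
      rw [show (∑' x : ℕ, ENNReal.ofReal (|f x| * m x))
          = ENNReal.ofReal (∑' x : ℕ, |f x| * m x) from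
        (ENNReal.ofReal_tsum_of_nonneg
          (fun x => mul_nonneg (abs_nonneg _) (hm_nonneg x)) hfm).symm]
      exact ENNReal.ofReal_ne_top
  -- Stein identity for f, a.e.
  have hTid : ∀ᵐ s ∂μ, (∑' x : ℕ, f x * Iphi φ s x)
      = Ef + (lam - s) * (∑' x : ℕ, g (x + 1) * Iphi φ s x) := by
    filter_upwards [hμpos, hZae, hgs] with s h1 h2 h3
    have := (stein_transfer hφ0 hφ h1.le h2 (w := g) (h := f) (E := Ef) hg h3).2
    linarith
  -- facts about M
  have hMnonneg : 0 ≤ M :=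
    le_trans (div_nonneg (abs_nonneg _) (hu 0).le) (le_ciSup hM 0)
  have hMub : ∀ x : ℕ, |g (x + 1) - g x| ≤ M * u x := fun x =>
    (div_le_iff₀ (hu x)).mp (le_ciSup hM x) |>.trans (by rw [mul_comm])
  rcases hMnonneg.lt_or_eq with hMpos | hMzero
  swap
  · -- case M = 0 : g is constant
    have hgconst : ∀ x : ℕ, g x = g 0 := by
      intro x
      induction x with
      | zero => rfl
      | succ n ih =>
        have h1 := hMub n
        rw [← hMzero, zero_mul] at h1
        have := abs_nonpos_iff.mp h1
        have : g (n + 1) = g n := by linarith [sub_eq_zero.mp this]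
        rw [this, ih]
    have hTid0 : ∀ᵐ s ∂μ, (∑' x : ℕ, f x * Iphi φ s x)
        = Ef + g 0 * (lam - s) := by
      filter_upwards [hTid, hμpos, hZae] with s h1 h2 h3
      rw [h1]
      have : (∑' x : ℕ, g (x + 1) * Iphi φ s x) = g 0 * ∑' x : ℕ, Iphi φ s x := by
        rw [← tsum_mul_left]
        exact tsum_congr fun x => by rw [hgconst (x + 1)]
      rw [this, tsum_Iphi hφ h2.le h3]
      ring
    have hcalc : ∑' x : ℕ, f x * m x = Ef := by
      rw [hTS, integral_congr_ae hTid0,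
        integral_add (integrable_const Ef)
          (hIls.const_mul (g 0)),
        integral_const, integral_const_mul, hintlam]
      simp
    rw [hcalc, sub_self, abs_zero, ← hMzero]
    simp
  -- main case : 0 < M
  have hMne : M ≠ 0 := hMpos.ne'
  set h : ℕ → ℝ := fun x => g (x + 1) / M with hhdef
  have hgsM : ∀ᵐ s ∂μ, Summable fun x => |h x| * Iphi φ s x := by
    filter_upwards [hgs] with s h3
    refine (h3.mul_left M⁻¹).congr fun x => ?_
    rw [hhdef]
    simp only [abs_div, abs_of_pos hMpos]
    ring
  have hLip : ∀ x : ℕ, |h (x + 1) - h x| ≤ u (x + 1) := by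
    intro x
    rw [hhdef]
    simp only []
    rw [div_sub_div_same, abs_div, abs_of_pos hMpos, div_le_iff₀ hMpos]
    calc |g (x + 1 + 1) - g (x + 1)| ≤ M * u (x + 1) := hMub (x + 1)
      _ = u (x + 1) * M := by ring
  -- truncated test functions
  set En : ℕ → ℝ := fun n => ∑' y : ℕ, clamp n (h y) * Iphi φ lam y with hEndef
  set Hn : ℕ → ℝ → ℝ := fun n s => ∑' x : ℕ, clamp n (h x) * Iphi φ s x with hHndef
  have hIlam_sum : Summable (Iphi φ lam) := summable_Iphi hZ
  have hsum_lam : ∀ n : ℕ, Summable fun x => |clamp n (h x)| * Iphi φ lam x := by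
    intro n
    refine Summable.of_nonneg_of_le
      (fun x => mul_nonneg (abs_nonneg _) (Iphi_nonneg hφ hlam_nonneg x))
      (fun x => mul_le_mul_of_nonneg_right (abs_clamp_le_nat n (h x))
        (Iphi_nonneg hφ hlam_nonneg x))
      (hIlam_sum.mul_left _)
  have hsum_ae : ∀ n : ℕ, ∀ᵐ s ∂μ, Summable fun x => |clamp n (h x)| * Iphi φ s x := by
    intro n
    filter_upwards [hμpos, hZae] with s h1 h2
    refine Summable.of_nonneg_of_le
      (fun x => mul_nonneg (abs_nonneg _) (Iphi_nonneg hφ h1.le x))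
      (fun x => mul_le_mul_of_nonneg_right (abs_clamp_le_nat n (h x))
        (Iphi_nonneg hφ h1.le x))
      ((summable_Iphi h2).mul_left _)
  set ghn : ℕ → ℕ → ℝ := fun n => mkSol φ lam (fun x => clamp n (h x)) (En n) with hghndef
  have hghn_eq : ∀ n x : ℕ, lam * ghn n (x + 1) - φ x * ghn n x
      = clamp n (h x) - En n := fun n x => mkSol_eq hlam_pos.ne' _ _ x
  have hKn : ∀ n x : ℕ, |ghn n x| ≤ K := by
    intro n
    refine hK (fun x => clamp n (h x))
      (fun x => (abs_clamp_sub_clamp n _ _).trans (hLip x)) (hsum_lam n) (hsum_ae n)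
      (ghn n) (fun x => hghn_eq n x) rfl
  -- uniform Stein bound for the truncations
  have hHnb : ∀ᵐ s ∂μ, ∀ n : ℕ, |Hn n s - En n| ≤ K * |lam - s| := by
    filter_upwards [hμpos, hZae] with s h1 h2
    intro n
    have hIs : Summable (Iphi φ s) := summable_Iphi h2
    have hwsum : Summable fun x => |ghn n (x + 1)| * Iphi φ s x := by
      refine Summable.of_nonneg_of_le
        (fun x => mul_nonneg (abs_nonneg _) (Iphi_nonneg hφ h1.le x))
        (fun x => mul_le_mul_of_nonneg_right (hKn n (x + 1)) (Iphi_nonneg hφ h1.le x))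
        (hIs.mul_left K)
    have hst := (stein_transfer hφ0 hφ h1.le h2 (fun x => hghn_eq n x) hwsum).2
    have habs' : Summable fun x : ℕ => |ghn n (x + 1) * Iphi φ s x| :=
      hwsum.congr fun x => by rw [abs_mul, abs_of_nonneg (Iphi_nonneg hφ h1.le x)]
    show |(∑' x : ℕ, clamp n (h x) * Iphi φ s x) - En n| ≤ K * |lam - s|
    rw [hst, abs_mul]
    have hA : |∑' x : ℕ, ghn n (x + 1) * Iphi φ s x| ≤ K := by
      calc |∑' x : ℕ, ghn n (x + 1) * Iphi φ s x|
          ≤ ∑' x : ℕ, |ghn n (x + 1) * Iphi φ s x| := by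
            have h5 := norm_tsum_le_tsum_norm
              (f := fun x : ℕ => ghn n (x + 1) * Iphi φ s x)
              (by simpa only [Real.norm_eq_abs] using habs')
            simpa only [Real.norm_eq_abs] using h5
        _ ≤ ∑' x : ℕ, K * Iphi φ s x := by
            refine Summable.tsum_le_tsum (fun x => ?_) habs' (hIs.mul_left K)
            rw [abs_mul, abs_of_nonneg (Iphi_nonneg hφ h1.le x)]
            exact mul_le_mul_of_nonneg_right (hKn n (x + 1)) (Iphi_nonneg hφ h1.le x)
        _ = K := by rw [tsum_mul_left, tsum_Iphi hφ h1.le h2, mul_one]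
    calc |lam - s| * |∑' x : ℕ, ghn n (x + 1) * Iphi φ s x|
        ≤ |lam - s| * K := mul_le_mul_of_nonneg_left hA (abs_nonneg _)
      _ = K * |lam - s| := by ring
  -- convergence of the truncations
  have hHtend : ∀ᵐ s ∂μ, Tendsto (fun n => Hn n s) atTop
      (nhds (∑' x : ℕ, h x * Iphi φ s x)) := by
    filter_upwards [hμpos, hZae, hgsM] with s h1 h2 h3
    refine tendsto_tsum_of_dominated_convergence h3
      (fun x => (tendsto_clamp (h x)).mul_const _) ?_
    filter_upwards with n x
    rw [norm_mul, Real.norm_eq_abs, Real.norm_eq_abs,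
      abs_of_nonneg (Iphi_nonneg hφ h1.le x)]
    exact mul_le_mul_of_nonneg_right (abs_clamp_le_abs n (h x)) (Iphi_nonneg hφ h1.le x)
  -- pick a good point to bound (En)
  obtain ⟨s₀, hb₀, ht₀⟩ := (hHnb.and hHtend).exists
  obtain ⟨C₀, hC₀⟩ := isBounded_iff_forall_norm_le.mp
    (Metric.isBounded_range_of_tendsto _ ht₀)
  have hEnBdd : ∀ n : ℕ, ‖En n‖ ≤ C₀ + K * |lam - s₀| := by
    intro n
    have h1 := hb₀ n
    have h2 : ‖Hn n s₀‖ ≤ C₀ := hC₀ _ (Set.mem_range_self n)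
    rw [Real.norm_eq_abs] at *
    calc |En n| = |Hn n s₀ - (Hn n s₀ - En n)| := by ring_nf
      _ ≤ |Hn n s₀| + |Hn n s₀ - En n| := abs_sub _ _
      _ ≤ C₀ + K * |lam - s₀| := add_le_add h2 h1
  obtain ⟨c, _, σ, hσ, hcc⟩ := tendsto_subseq_of_bounded
    (isBounded_iff_forall_norm_le.mpr ⟨C₀ + K * |lam - s₀|,
      by rintro x ⟨n, rfl⟩; exact hEnBdd n⟩)
    (fun n => Set.mem_range_self (f := En) n)
  -- the limit bound
  have hHc : ∀ᵐ s ∂μ, |(∑' x : ℕ, h x * Iphi φ s x) - c| ≤ K * |lam - s| := by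
    filter_upwards [hHnb, hHtend] with s hb ht
    have htt : Tendsto (fun k => |Hn (σ k) s - En (σ k)|) atTop
        (nhds |(∑' x : ℕ, h x * Iphi φ s x) - c|) :=
      ((ht.comp hσ.tendsto_atTop).sub hcc).abs
    exact le_of_tendsto htt (Filter.Eventually.of_forall fun k => hb (σ k))
  -- final assembly
  set W : ℝ → ℝ := fun s => (lam - s) * (M * (HE φ h s - c)) with hWdef
  have hWmeas : AEStronglyMeasurable W μ := by
    refine Measurable.aestronglyMeasurable ?_
    exact (measurable_const.sub measurable_id).mul
      (((measurable_HE h).sub_const c).const_mul M)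
  have hWbound : ∀ᵐ s ∂μ, ‖W s‖ ≤ (M * K) * (s - lam) ^ 2 := by
    filter_upwards [hμpos, hZae, hgsM, hHc] with s h1 h2 h3 h4
    simp only [hWdef, Real.norm_eq_abs]
    rw [HE_eq hφ h1.le h2 h3, abs_mul, abs_mul, abs_of_pos hMpos]
    calc |lam - s| * (M * |(∑' x : ℕ, h x * Iphi φ s x) - c|)
        ≤ |lam - s| * (M * (K * |lam - s|)) := by
          refine mul_le_mul_of_nonneg_left ?_ (abs_nonneg _)
          exact mul_le_mul_of_nonneg_left h4 hMpos.le
      _ = (M * K) * (s - lam) ^ 2 := by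
          rw [show |lam - s| = |s - lam| from abs_sub_comm lam s, ← sq_abs (s - lam)]
          ring
  have hWint : Integrable W μ := by
    refine Integrable.mono' (hsq.const_mul (M * K)) hWmeas ?_
    exact hWbound
  have hTid2 : ∀ᵐ s ∂μ, (∑' x : ℕ, f x * Iphi φ s x)
      = Ef + W s + (M * c) * (lam - s) := by
    filter_upwards [hTid, hμpos, hZae, hgsM] with s h1 h2 h3 h4
    rw [h1]
    simp only [hWdef]
    have hGH : (∑' x : ℕ, g (x + 1) * Iphi φ s x)
        = M * ∑' x : ℕ, h x * Iphi φ s x := by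
      rw [← tsum_mul_left]
      refine tsum_congr fun x => ?_
      rw [hhdef]
      field_simp
    rw [hGH, HE_eq hφ h2.le h3 h4]
    ring
  have hcalc : (∑' x : ℕ, f x * m x) - Ef = ∫ s, W s ∂μ := by
    have hint1 : Integrable (fun s : ℝ => Ef + W s) μ := (integrable_const Ef).add hWint
    have hint2 : Integrable (fun s : ℝ => M * c * (lam - s)) μ := hIls.const_mul (M * c)
    rw [hTS, integral_congr_ae hTid2, integral_add hint1 hint2,
      integral_add (integrable_const Ef) hWint,
      integral_const, integral_const_mul, hintlam]
    simp
  rw [hcalc]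
  calc |∫ s, W s ∂μ| ≤ ∫ s, ‖W s‖ ∂μ := by
        rw [← Real.norm_eq_abs]
        exact norm_integral_le_integral_norm W
    _ ≤ ∫ s, (M * K) * (s - lam) ^ 2 ∂μ :=
        integral_mono_ae hWint.norm (hsq.const_mul (M * K)) hWbound
    _ = M * K * ∫ s, (s - lam) ^ 2 ∂μ := integral_const_mul _ _
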